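/- The hypergeometric distribution Hyp(n, r, m) with mass function π(j) = C(r,j)·C(n-r, m-j)/C(n,m) is a stationary distribution for the generalized Bernoulli-Laplace chain: if X0 ~ Hyp(n, r, m) and X1 = X0 - H1 + H2 with H1 ~ Hyp(m, X0, k), H2 ~ Hyp(n-m, r - X0, k) conditionally independent given X0, then X1 ~ Hyp(n, r, m). -/

import Mathlib

/-- The hypergeometric probability mass function: `s` draws without replacement from a
population of `N` balls of which `K` are marked; probability of drawing `j` marked balls. -/
noncomputable def hypPMF (N K s j : ℕ) : ℝ :=
  if j ≤ s then (K.choose j * (N - K).choose (s - j) : ℝ) / (N.choose s) else 0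

/-- Numerator weight of a transition term of the Bernoulli–Laplace chain. -/
def blW (n m r k x j1 j2 : ℕ) : ℕ :=
  r.choose x * (n - r).choose (m - x) * x.choose j1 * (m - x).choose (k - j1) *
    (r - x).choose j2 * ((n - m) - (r - x)).choose (k - j2)

lemma blW_ne_zero_ineqs {n m r k x j1 j2 : ℕ} (hk : k ≤ m) (hm : 2 * m ≤ n) (hr : r ≤ n)
    (hxm : x ≤ m) (hj1 : j1 ≤ k) (hj2 : j2 ≤ k) (h : blW n m r k x j1 j2 ≠ 0) :
    j1 ≤ x ∧ x ≤ r ∧ m - x ≤ n - r ∧ k - j1 ≤ m - x ∧ j2 ≤ r - x ∧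
      k - j2 ≤ (n - m) - (r - x) := by
  unfold blW at h
  have h1 : r.choose x ≠ 0 := by intro h0; apply h; rw [h0]; ring
  have h2 : (n - r).choose (m - x) ≠ 0 := by intro h0; apply h; rw [h0]; ring
  have h3 : x.choose j1 ≠ 0 := by intro h0; apply h; rw [h0]; ring
  have h4 : (m - x).choose (k - j1) ≠ 0 := by intro h0; apply h; rw [h0]; ring
  have h5 : (r - x).choose j2 ≠ 0 := by intro h0; apply h; rw [h0]; ring
  have h6 : ((n - m) - (r - x)).choose (k - j2) ≠ 0 := by intro h0; apply h; rw [h0]; ring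
  rw [Ne, Nat.choose_eq_zero_iff, not_lt] at h1 h2 h3 h4 h5 h6
  omega

lemma blW_swap {n m r k x y j1 j2 : ℕ} (hk : k ≤ m) (hm : 2 * m ≤ n) (hr : r ≤ n)
    (hxm : x ≤ m) (hym : y ≤ m) (hj1 : j1 ≤ k) (hj2 : j2 ≤ k)
    (hswap : x + j2 = y + j1) (hne : blW n m r k x j1 j2 ≠ 0) :
    blW n m r k x j1 j2 = blW n m r k y j2 j1 := by
  obtain ⟨i1, i2, i3, i4, i5, i6⟩ := blW_ne_zero_ineqs hk hm hr hxm hj1 hj2 hne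
  -- the corresponding genuine inequalities for the `y` side
  have j1' : j2 ≤ y := by omega
  have j2' : y ≤ r := by omega
  have j3' : m - y ≤ n - r := by omega
  have j4' : k - j2 ≤ m - y := by omega
  have j5' : j1 ≤ r - y := by omega
  have j6' : k - j1 ≤ (n - m) - (r - y) := by omega
  have F : ∀ a : ℕ, ((a.factorial : ℝ)) ≠ 0 := fun a =>
    Nat.cast_ne_zero.mpr (Nat.factorial_ne_zero a)
  have : ((blW n m r k x j1 j2 : ℕ) : ℝ) = ((blW n m r k y j2 j1 : ℕ) : ℝ) := by
    unfold blW
    push_cast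
    rw [Nat.cast_choose ℝ i2, Nat.cast_choose ℝ i1, Nat.cast_choose ℝ i3,
      Nat.cast_choose ℝ i4, Nat.cast_choose ℝ i5, Nat.cast_choose ℝ i6,
      Nat.cast_choose ℝ j1', Nat.cast_choose ℝ j2', Nat.cast_choose ℝ j3',
      Nat.cast_choose ℝ j4', Nat.cast_choose ℝ j5', Nat.cast_choose ℝ j6']
    rw [show y - j2 = x - j1 by omega, show r - y - j1 = r - x - j2 by omega,
      show m - y - (k - j2) = m - x - (k - j1) by omega,
      show (n - m) - (r - y) - (k - j1) = (n - m) - (r - x) - (k - j2) by omega,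
      show n - r - (m - y) = (n - m) - (r - y) by omega,
      show n - r - (m - x) = (n - m) - (r - x) by omega]
    field_simp
  exact_mod_cast this

lemma hyp_prod_eq (n m r k x j1 j2 : ℕ) (hxm : x ≤ m) (hj1 : j1 ≤ k) (hj2 : j2 ≤ k) :
    hypPMF n r m x * (hypPMF m x k j1 * hypPMF (n - m) (r - x) k j2)
      = (blW n m r k x j1 j2 : ℝ) /
        ((n.choose m : ℝ) * (m.choose k : ℝ) * ((n - m).choose k : ℝ)) := by
  unfold hypPMF blW
  rw [if_pos hxm, if_pos hj1, if_pos hj2]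
  push_cast
  ring

lemma hyp_key (n m r k x y j1 j2 : ℕ) (hk : k ≤ m) (hm : 2 * m ≤ n) (hr : r ≤ n)
    (hj1 : j1 ≤ k) (hj2 : j2 ≤ k) (hswap : x + j2 = y + j1) :
    hypPMF n r m x * (hypPMF m x k j1 * hypPMF (n - m) (r - x) k j2)
      = hypPMF n r m y * (hypPMF m y k j2 * hypPMF (n - m) (r - y) k j1) := by
  by_cases hxm : x ≤ m
  · by_cases hym : y ≤ m
    · rw [hyp_prod_eq n m r k x j1 j2 hxm hj1 hj2, hyp_prod_eq n m r k y j2 j1 hym hj2 hj1]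
      congr 2
      rcases eq_or_ne (blW n m r k x j1 j2) 0 with h0 | h0
      · rcases eq_or_ne (blW n m r k y j2 j1) 0 with h1 | h1
        · rw [h0, h1]
        · exact_mod_cast (blW_swap hk hm hr hym hxm hj2 hj1 hswap.symm h1).symm
      · exact_mod_cast blW_swap hk hm hr hxm hym hj1 hj2 hswap h0
    · -- y > m : RHS is zero; show LHS is zero too
      rw [hyp_prod_eq n m r k x j1 j2 hxm hj1 hj2]
      have h0 : blW n m r k x j1 j2 = 0 := by
        by_contra h0
        obtain ⟨i1, i2, i3, i4, i5, i6⟩ := blW_ne_zero_ineqs hk hm hr hxm hj1 hj2 h0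
        omega
      simp [hypPMF, hym, h0]
  · by_cases hym : y ≤ m
    · rw [hyp_prod_eq n m r k y j2 j1 hym hj2 hj1]
      have h0 : blW n m r k y j2 j1 = 0 := by
        by_contra h0
        obtain ⟨i1, i2, i3, i4, i5, i6⟩ := blW_ne_zero_ineqs hk hm hr hym hj2 hj1 h0
        omega
      simp [hypPMF, hxm, h0]
    · simp [hypPMF, hxm, hym]

lemma hyp_sum_one (N K s : ℕ) (hs : s ≤ N) (hK : K ≤ N) :
    ∑ j ∈ Finset.range (s + 1), hypPMF N K s j = 1 := by
  have hvand : ∑ j ∈ Finset.range (s + 1), K.choose j * (N - K).choose (s - j)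
      = N.choose s := by
    have h := Nat.add_choose_eq K (N - K) s
    rw [Nat.add_sub_cancel' hK] at h
    rw [h, Finset.Nat.sum_antidiagonal_eq_sum_range_succ_mk]
  have hNs : ((N.choose s : ℕ) : ℝ) ≠ 0 :=
    Nat.cast_ne_zero.mpr (Nat.choose_pos hs).ne'
  have : ∑ j ∈ Finset.range (s + 1), hypPMF N K s j
      = (∑ j ∈ Finset.range (s + 1), (K.choose j * (N - K).choose (s - j) : ℝ)) /
        (N.choose s : ℝ) := by
    rw [Finset.sum_div]
    refine Finset.sum_congr rfl fun j hj => ?_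
    have : j ≤ s := Nat.lt_succ_iff.mp (Finset.mem_range.mp hj)
    simp [hypPMF, this]
  rw [this, show (∑ j ∈ Finset.range (s + 1), (K.choose j * (N - K).choose (s - j) : ℝ))
      = (N.choose s : ℝ) by exact_mod_cast congrArg (Nat.cast : ℕ → ℝ) hvand,
    div_self hNs]

/-- `Hyp(n, r, m)` is a stationary distribution for the generalized
Bernoulli-Laplace chain. -/
theorem bl_hypergeometric_stationary (n m r k : ℕ)
    (hk : k ≤ m) (hm : 2 * m ≤ n) (hr : r ≤ n) (hm0 : 0 < m) :
    ∀ y : ℕ,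
      ∑ x ∈ Finset.range (n + 1),
        hypPMF n r m x *
          ∑ j1 ∈ Finset.range (k + 1), ∑ j2 ∈ Finset.range (k + 1),
            (if x + j2 = y + j1 then hypPMF m x k j1 * hypPMF (n - m) (r - x) k j2 else 0)
        = hypPMF n r m y := by
  intro y
  have step1 : ∑ x ∈ Finset.range (n + 1),
      hypPMF n r m x *
        ∑ j1 ∈ Finset.range (k + 1), ∑ j2 ∈ Finset.range (k + 1),
          (if x + j2 = y + j1 then hypPMF m x k j1 * hypPMF (n - m) (r - x) k j2 else 0)
      = ∑ j1 ∈ Finset.range (k + 1), ∑ j2 ∈ Finset.range (k + 1),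
          ∑ x ∈ Finset.range (n + 1),
          (if x + j2 = y + j1 then
            hypPMF n r m y * (hypPMF m y k j2 * hypPMF (n - m) (r - y) k j1) else 0) := by
    have e1 : ∀ x ∈ Finset.range (n + 1),
        hypPMF n r m x *
          ∑ j1 ∈ Finset.range (k + 1), ∑ j2 ∈ Finset.range (k + 1),
            (if x + j2 = y + j1 then hypPMF m x k j1 * hypPMF (n - m) (r - x) k j2 else 0)
        = ∑ j1 ∈ Finset.range (k + 1), ∑ j2 ∈ Finset.range (k + 1),
            (if x + j2 = y + j1 then
              hypPMF n r m y * (hypPMF m y k j2 * hypPMF (n - m) (r - y) k j1) else 0) := by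
      intro x _
      rw [Finset.mul_sum]
      refine Finset.sum_congr rfl fun j1 hj1 => ?_
      rw [Finset.mul_sum]
      refine Finset.sum_congr rfl fun j2 hj2 => ?_
      split_ifs with h
      · exact hyp_key n m r k x y j1 j2 hk hm hr
          (Nat.lt_succ_iff.mp (Finset.mem_range.mp hj1))
          (Nat.lt_succ_iff.mp (Finset.mem_range.mp hj2)) h
      · exact mul_zero _
    rw [Finset.sum_congr rfl e1, Finset.sum_comm]
    refine Finset.sum_congr rfl fun j1 _ => Finset.sum_comm
  rw [step1]
  rcases eq_or_ne (hypPMF n r m y) 0 with hy0 | hy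
  · simp [hy0]
  · -- extract basic facts from `hypPMF n r m y ≠ 0`
    have hym : y ≤ m := by
      by_contra h; exact hy (by simp [hypPMF, h])
    have hyr : y ≤ r := by
      by_contra h
      exact hy (by simp [hypPMF, hym, Nat.choose_eq_zero_of_lt (show r < y by omega)])
    have hmy : m - y ≤ n - r := by
      by_contra h
      exact hy (by simp [hypPMF, hym, Nat.choose_eq_zero_of_lt (show n - r < m - y by omega)])
    have inner : ∀ j1 ∈ Finset.range (k + 1), ∀ j2 ∈ Finset.range (k + 1),
        ∑ x ∈ Finset.range (n + 1),
          (if x + j2 = y + j1 then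
            hypPMF n r m y * (hypPMF m y k j2 * hypPMF (n - m) (r - y) k j1) else 0)
        = hypPMF n r m y * (hypPMF m y k j2 * hypPMF (n - m) (r - y) k j1) := by
      intro j1 hj1 j2 hj2
      rw [Finset.mem_range] at hj1 hj2
      by_cases hle : j2 ≤ y + j1
      · refine Finset.sum_eq_single_of_mem (y + j1 - j2) ?_ ?_ |>.trans (if_pos (by omega))
        · exact Finset.mem_range.mpr (by omega)
        · exact fun b _ hb => if_neg (by omega)
      · have hz : hypPMF m y k j2 = 0 := by
          simp [hypPMF, Nat.choose_eq_zero_of_lt (show y < j2 by omega)]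
        rw [Finset.sum_eq_zero fun x _ => if_neg (by omega), hz]
        ring
    rw [Finset.sum_congr rfl fun j1 hj1 =>
      Finset.sum_congr rfl fun j2 hj2 => inner j1 hj1 j2 hj2]
    have expand : ∑ j1 ∈ Finset.range (k + 1), ∑ j2 ∈ Finset.range (k + 1),
        hypPMF n r m y * (hypPMF m y k j2 * hypPMF (n - m) (r - y) k j1)
        = hypPMF n r m y * ((∑ j2 ∈ Finset.range (k + 1), hypPMF m y k j2) *
            (∑ j1 ∈ Finset.range (k + 1), hypPMF (n - m) (r - y) k j1)) := by
      simp only [Finset.mul_sum, Finset.sum_mul]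
    rw [expand, hyp_sum_one m y k hk hym,
      hyp_sum_one (n - m) (r - y) k (by omega) (by omega)]
    ring
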